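/- Let m ≥ 1 and n ≥ 1 be integers and let x be a real number with 0 < x < π. Then the sum over all even indices k with 0 ≤ k ≤ n of C(n-k+m, m) · cos((k+1/2)x) is strictly positive. -/

import Mathlib

open Real Finset

lemma abs_sin_nat_mul_le' (N : ℕ) (t : ℝ) : |Real.sin (N * t)| ≤ N * |Real.sin t| := by
  induction N with
  | zero => simp
  | succ n ih =>
    have h : ((n+1 : ℕ) : ℝ) * t = n * t + t := by push_cast; ring
    rw [h, Real.sin_add]
    calc |Real.sin (n*t) * Real.cos t + Real.cos (n*t) * Real.sin t|
        ≤ |Real.sin (n*t) * Real.cos t| + |Real.cos (n*t) * Real.sin t| := abs_add_le _ _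
      _ ≤ |Real.sin (n*t)| * 1 + 1 * |Real.sin t| := by
          rw [abs_mul, abs_mul]
          gcongr
          · exact Real.abs_cos_le_one t
          · exact Real.abs_cos_le_one _
      _ ≤ n * |Real.sin t| + 1 * |Real.sin t| := by linarith
      _ = (n+1 : ℕ) * |Real.sin t| := by push_cast; ring

-- Id1
lemma id1 (x : ℝ) (p : ℕ) :
    2 * Real.sin x * (∑ j ∈ range (p+1), Real.cos ((2*j + 1/2) * x))
      = Real.sin ((2*p + 3/2) * x) + Real.sin (x/2) := by
  induction p with
  | zero =>
    rw [Finset.sum_range_one]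
    push_cast
    have h1 : (2*(0:ℝ) + 3/2) * x = x + (2*(0:ℝ)+1/2)*x := by ring
    have h2 : x / 2 = x - (2*(0:ℝ)+1/2)*x := by ring
    rw [h1, h2, Real.sin_add, Real.sin_sub]
    ring
  | succ p ih =>
    rw [Finset.sum_range_succ, mul_add, ih]
    have h1 : (2*((p:ℝ)+1) + 3/2) * x = x + (2*(p+1)+1/2)*x := by ring
    have h2 : (2*(p:ℝ) + 3/2) * x = (2*((p:ℝ)+1)+1/2)*x - x := by ring
    push_cast
    rw [h1, h2, Real.sin_add, Real.sin_sub]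
    ring

-- Id2
lemma id2 (x : ℝ) (p : ℕ) :
    Real.sin x * (∑ j ∈ range (p+1), Real.sin ((2*j + 3/2) * x))
      = Real.sin ((p+1) * x) * Real.sin ((p + 3/2) * x) := by
  induction p with
  | zero =>
    rw [Finset.sum_range_one]
    norm_num
  | succ p ih =>
    rw [Finset.sum_range_succ, mul_add, ih]
    push_cast
    have h1 : (2*((p:ℝ)+1) + 3/2)*x = ((p:ℝ)+1)*x + (((p:ℝ)+3/2)*x + x) := by ring
    have h3 : ((p:ℝ)+1+1)*x = ((p:ℝ)+1)*x + x := by ring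
    have h4 : ((p:ℝ)+1+3/2)*x = ((p:ℝ)+3/2)*x + x := by ring
    rw [h1, h3, h4]
    simp only [Real.sin_add, Real.cos_add]
    linear_combination (-(Real.sin (((p:ℝ)+1)*x) * Real.sin (((p:ℝ)+3/2)*x))) * (Real.sin_sq_add_cos_sq x)

-- triangular sum: ∑_{i<N} ∑_{j≤i} u j = ∑_{j<N} (N-j) u j
lemma id3 (u : ℕ → ℝ) (N : ℕ) :
    ∑ i ∈ range N, ∑ j ∈ range (i+1), u j = ∑ j ∈ range N, ((N - j : ℕ) : ℝ) * u j := by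
  induction N with
  | zero => simp
  | succ N ih =>
    rw [Finset.sum_range_succ, ih, Finset.sum_range_succ (fun j => ((N + 1 - j : ℕ) : ℝ) * u j)]
    have : ∀ j ∈ range N, ((N + 1 - j : ℕ) : ℝ) * u j = ((N - j : ℕ) : ℝ) * u j + u j := by
      intro j hj
      rw [Finset.mem_range] at hj
      have : (N + 1 - j : ℕ) = (N - j) + 1 := by omega
      rw [this]
      push_cast
      ring
    rw [Finset.sum_congr rfl this, Finset.sum_add_distrib, Finset.sum_range_succ u N]
    have hN : (N + 1 - N : ℕ) = 1 := by omega
    rw [hN]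
    push_cast
    ring

lemma qid (x : ℝ) (p : ℕ) :
    2 * Real.sin x * Real.sin x * (∑ j ∈ range (p+1), ((p+1-j:ℕ):ℝ) * Real.cos ((2*j+1/2)*x))
      = ((p:ℝ)+1) * (Real.sin x * Real.sin (x/2))
        + Real.sin (((p:ℝ)+1)*x) * Real.sin (((p:ℝ)+3/2)*x) := by
  have h1 : ∑ j ∈ range (p+1), ((p+1-j:ℕ):ℝ) * Real.cos ((2*j+1/2)*x)
      = ∑ i ∈ range (p+1), ∑ j ∈ range (i+1), Real.cos ((2*j+1/2)*x) :=
    (id3 (fun j => Real.cos ((2*(j:ℝ)+1/2)*x)) (p+1)).symm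
  rw [h1]
  have h3 : ∑ i ∈ range (p+1), (2 * Real.sin x * ∑ j ∈ range (i+1), Real.cos ((2*(j:ℝ)+1/2)*x))
      = ∑ i ∈ range (p+1), (Real.sin ((2*(i:ℝ)+3/2)*x) + Real.sin (x/2)) :=
    Finset.sum_congr rfl (fun i _ => id1 x i)
  calc 2 * Real.sin x * Real.sin x * (∑ i ∈ range (p+1), ∑ j ∈ range (i+1), Real.cos ((2*(j:ℝ)+1/2)*x))
      = Real.sin x * ∑ i ∈ range (p+1), (2 * Real.sin x * ∑ j ∈ range (i+1), Real.cos ((2*(j:ℝ)+1/2)*x)) := by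
        rw [← Finset.mul_sum]; ring
    _ = Real.sin x * ∑ i ∈ range (p+1), (Real.sin ((2*(i:ℝ)+3/2)*x) + Real.sin (x/2)) := by rw [h3]
    _ = Real.sin x * (∑ i ∈ range (p+1), Real.sin ((2*(i:ℝ)+3/2)*x)) + ((p:ℝ)+1) * (Real.sin x * Real.sin (x/2)) := by
        rw [Finset.sum_add_distrib, Finset.sum_const, Finset.card_range, mul_add]
        push_cast
        ring
    _ = ((p:ℝ)+1) * (Real.sin x * Real.sin (x/2)) + Real.sin (((p:ℝ)+1)*x) * Real.sin (((p:ℝ)+3/2)*x) := by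
        rw [id2 x p]
        ring

lemma keypos (x : ℝ) (hx : 0 < x) (hx' : x < π) (N : ℕ) (hN : 1 ≤ N) :
    0 < (N:ℝ) * (Real.sin x * Real.sin (x/2)) + Real.sin ((N:ℝ)*x) * Real.sin (((N:ℝ) + 1/2)*x) := by
  have hs : 0 < Real.sin x := Real.sin_pos_of_pos_of_lt_pi hx hx'
  have hpi := Real.pi_pos
  have hs2 : 0 < Real.sin (x/2) := Real.sin_pos_of_pos_of_lt_pi (by linarith) (by linarith)
  have hc2 : 0 < Real.cos (x/2) := Real.cos_pos_of_mem_Ioo ⟨by linarith, by linarith⟩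
  have habs : |Real.sin ((N:ℝ)*x)| ≤ (N:ℝ) * Real.sin x := by
    have := abs_sin_nat_mul_le' N x
    rwa [abs_of_pos hs] at this
  have hexp : Real.sin (((N:ℝ)+1/2)*x) = Real.sin ((N:ℝ)*x) * Real.cos (x/2) + Real.cos ((N:ℝ)*x) * Real.sin (x/2) := by
    have h : ((N:ℝ)+1/2)*x = (N:ℝ)*x + x/2 := by ring
    rw [h, Real.sin_add]
  rw [hexp]
  have hcos1 : |Real.cos ((N:ℝ)*x)| ≤ 1 := Real.abs_cos_le_one _
  have e1 : -((N:ℝ) * Real.sin x) ≤ Real.sin ((N:ℝ)*x) * Real.cos ((N:ℝ)*x) := by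
    have h := abs_mul (Real.sin ((N:ℝ)*x)) (Real.cos ((N:ℝ)*x))
    have h2 : |Real.sin ((N:ℝ)*x) * Real.cos ((N:ℝ)*x)| ≤ (N:ℝ) * Real.sin x := by
      rw [h]
      calc |Real.sin ((N:ℝ)*x)| * |Real.cos ((N:ℝ)*x)| ≤ ((N:ℝ) * Real.sin x) * 1 := by
            apply mul_le_mul habs hcos1 (abs_nonneg _) (by positivity)
        _ = (N:ℝ) * Real.sin x := by ring
    linarith [neg_abs_le (Real.sin ((N:ℝ)*x) * Real.cos ((N:ℝ)*x))]
  by_cases hz : Real.sin ((N:ℝ)*x) = 0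
  · rw [hz]
    have hN1 : (1:ℝ) ≤ (N:ℝ) := by exact_mod_cast hN
    nlinarith [mul_pos hs hs2]
  · have hsq : 0 < Real.sin ((N:ℝ)*x) * Real.sin ((N:ℝ)*x) * Real.cos (x/2) :=
      mul_pos (mul_self_pos.mpr hz) hc2
    have hnn : 0 ≤ (N:ℝ) * Real.sin x + Real.sin ((N:ℝ)*x) * Real.cos ((N:ℝ)*x) := by linarith
    nlinarith [mul_nonneg hs2.le hnn]

lemma qpos (x : ℝ) (hx : 0 < x) (hx' : x < π) (p : ℕ) :
    0 < ∑ j ∈ range (p+1), ((p+1-j:ℕ):ℝ) * Real.cos ((2*j+1/2)*x) := by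
  have hs : 0 < Real.sin x := Real.sin_pos_of_pos_of_lt_pi hx hx'
  have h := qid x p
  have hk := keypos x hx hx' (p+1) (Nat.le_add_left 1 p)
  have hc : ((p+1:ℕ):ℝ) = (p:ℝ)+1 := by push_cast; ring
  rw [hc] at hk
  have hk' : 0 < ((p:ℝ)+1) * (Real.sin x * Real.sin (x/2)) + Real.sin (((p:ℝ)+1)*x) * Real.sin (((p:ℝ)+3/2)*x) := by
    have harg : ((p:ℝ)+1+1/2)*x = ((p:ℝ)+3/2)*x := by ring
    rwa [harg] at hk
  by_contra hcon
  push_neg at hcon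
  nlinarith [mul_pos hs hs]

lemma telT (e : ℕ → ℝ) (K : ℕ) :
    ∑ i ∈ range K, ((i:ℝ)+1) * (e i - e (i+1)) = (∑ i ∈ range K, e i) - K * e K := by
  induction K with
  | zero => simp
  | succ K ih =>
    rw [Finset.sum_range_succ, ih, Finset.sum_range_succ]
    push_cast
    ring

lemma sum_ite_trunc (g : ℕ → ℝ) (J p : ℕ) (hp : p ≤ J) :
    ∑ j ∈ range (J+1), (if j ≤ p then g j else 0) = ∑ j ∈ range (p+1), g j := by
  have h1 : ∑ j ∈ range (p+1), (if j ≤ p then g j else 0)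
      = ∑ j ∈ range (J+1), (if j ≤ p then g j else 0) := by
    apply Finset.sum_subset
    · exact Finset.range_subset_range.mpr (by omega)
    · intro x hx hnx
      rw [Finset.mem_range] at hx
      rw [Finset.mem_range] at hnx
      exact if_neg (by omega)
  rw [← h1]
  apply Finset.sum_congr rfl
  intro j hj
  rw [Finset.mem_range] at hj
  exact if_pos (by omega)

lemma sum_ite_tail (h : ℕ → ℝ) (J j : ℕ) (hj : j ≤ J) :
    ∑ p ∈ range (J+1), (if j ≤ p then h p else 0) = ∑ i ∈ range (J+1-j), h (j+i) := by
  have h1 : ∑ p ∈ Finset.Ico j (J+1), (if j ≤ p then h p else 0)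
      = ∑ p ∈ range (J+1), (if j ≤ p then h p else 0) := by
    apply Finset.sum_subset
    · intro p hp
      rw [Finset.mem_Ico] at hp
      exact Finset.mem_range.mpr hp.2
    · intro p hp hnp
      rw [Finset.mem_range] at hp
      rw [Finset.mem_Ico] at hnp
      exact if_neg (by omega)
  rw [← h1]
  have h2 : ∑ p ∈ Finset.Ico j (J+1), (if j ≤ p then h p else 0)
      = ∑ p ∈ Finset.Ico j (J+1), h p := by
    apply Finset.sum_congr rfl
    intro p hp
    rw [Finset.mem_Ico] at hp
    exact if_pos hp.1
  rw [h2, Finset.sum_Ico_eq_sum_range]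

lemma key_coeff (c : ℕ → ℝ) (J : ℕ) (hc : ∀ i, J < i → c i = 0) (j : ℕ) (hj : j ≤ J) :
    ∑ p ∈ range (J+1), (if j ≤ p then ((p+1-j:ℕ):ℝ) * ((c p - c (p+1)) - (c (p+1) - c (p+2))) else 0)
      = c j := by
  rw [sum_ite_tail _ J j hj]
  have h1 : ∀ i ∈ range (J+1-j),
      ((j+i+1-j:ℕ):ℝ) * ((c (j+i) - c (j+i+1)) - (c (j+i+1) - c (j+i+2)))
        = ((i:ℝ)+1) * ((fun i => c (j+i) - c (j+i+1)) i - (fun i => c (j+i) - c (j+i+1)) (i+1)) := by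
    intro i _
    have : (j+i+1-j : ℕ) = i+1 := by omega
    rw [this]
    push_cast
    have e2 : j+(i+1) = j+i+1 := by omega
    have e3 : j+i+1+1 = j+i+2 := by omega
    rw [e2, e3]
  rw [Finset.sum_congr rfl h1, telT]
  have h2 : ∑ i ∈ range (J+1-j), (c (j+i) - c (j+i+1)) = c (j+0) - c (j+(J+1-j)) :=
    Finset.sum_range_sub' (fun i => c (j+i)) (J+1-j)
  rw [h2]
  have e4 : j + (J+1-j) = J+1 := by omega
  rw [e4]
  have z1 : c (J+1) = 0 := hc _ (by omega)
  have z2 : c (J+1+1) = 0 := hc _ (by omega)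
  rw [z1, z2]
  simp

lemma decomp (c u : ℕ → ℝ) (J : ℕ) (hc : ∀ i, J < i → c i = 0) :
    ∑ j ∈ range (J+1), c j * u j
      = ∑ p ∈ range (J+1), ((c p - c (p+1)) - (c (p+1) - c (p+2)))
          * (∑ j ∈ range (p+1), ((p+1-j:ℕ):ℝ) * u j) := by
  set d : ℕ → ℝ := fun p => (c p - c (p+1)) - (c (p+1) - c (p+2)) with hd
  calc ∑ j ∈ range (J+1), c j * u j
      = ∑ j ∈ range (J+1), (∑ p ∈ range (J+1), (if j ≤ p then ((p+1-j:ℕ):ℝ) * d p else 0)) * u j := by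
        apply Finset.sum_congr rfl
        intro j hj
        rw [Finset.mem_range] at hj
        rw [key_coeff c J hc j (by omega)]
    _ = ∑ j ∈ range (J+1), ∑ p ∈ range (J+1), (if j ≤ p then ((p+1-j:ℕ):ℝ) * d p else 0) * u j := by
        apply Finset.sum_congr rfl
        intro j _
        rw [Finset.sum_mul]
    _ = ∑ p ∈ range (J+1), ∑ j ∈ range (J+1), (if j ≤ p then ((p+1-j:ℕ):ℝ) * d p else 0) * u j :=
        Finset.sum_comm
    _ = ∑ p ∈ range (J+1), d p * (∑ j ∈ range (p+1), ((p+1-j:ℕ):ℝ) * u j) := by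
        apply Finset.sum_congr rfl
        intro p hp
        rw [Finset.mem_range] at hp
        have h1 : ∀ j, (if j ≤ p then ((p+1-j:ℕ):ℝ) * d p else 0) * u j
            = (if j ≤ p then ((p+1-j:ℕ):ℝ) * d p * u j else 0) := by
          intro j
          by_cases h : j ≤ p <;> simp [h]
        simp only [h1]
        rw [sum_ite_trunc (fun j => ((p+1-j:ℕ):ℝ) * d p * u j) J p (by omega), Finset.mul_sum]
        apply Finset.sum_congr rfl
        intro j _
        ring

lemma conv_choose (m' s : ℕ) :
    2 * Nat.choose (s+2) (m'+1) ≤ Nat.choose (s+4) (m'+1) + Nat.choose s (m'+1) := by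
  have p1 : Nat.choose (s+2) (m'+1) = Nat.choose s (m'+1) + (Nat.choose (s+1) m' + Nat.choose s m') := by
    have e1 : s+2 = (s+1)+1 := by omega
    rw [e1, Nat.choose_succ_succ, Nat.choose_succ_succ]
    ring
  have p2 : Nat.choose (s+4) (m'+1) = Nat.choose (s+2) (m'+1) + (Nat.choose (s+3) m' + Nat.choose (s+2) m') := by
    have e1 : s+4 = (s+3)+1 := by omega
    have e2 : s+3 = (s+2)+1 := by omega
    rw [e1, Nat.choose_succ_succ, e2, Nat.choose_succ_succ]
    ring
  have m1 : Nat.choose (s+1) m' ≤ Nat.choose (s+3) m' := Nat.choose_le_choose m' (by omega)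
  have m2 : Nat.choose s m' ≤ Nat.choose (s+2) m' := Nat.choose_le_choose m' (by omega)
  omega

lemma bdry0 (m : ℕ) (hm : 1 ≤ m) : 2 ≤ Nat.choose (m+2) m := by
  induction m with
  | zero => omega
  | succ k ih =>
    have e1 : k+1+2 = (k+2)+1 := by omega
    rw [e1, Nat.choose_succ_succ]
    rcases Nat.eq_zero_or_pos k with hk | hk
    · subst hk; decide
    · have := ih hk
      omega

lemma bdry1 (m : ℕ) (hm : 1 ≤ m) : 2 * (m+1) ≤ Nat.choose (m+3) m := by
  induction m with
  | zero => omega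
  | succ k ih =>
    have e1 : k+1+3 = (k+3)+1 := by omega
    rw [e1, Nat.choose_succ_succ]
    simp only [Nat.succ_eq_add_one]
    rcases Nat.eq_zero_or_pos k with hk | hk
    · subst hk; decide
    · have h1 := ih hk
      have h2 : Nat.choose (k+2) (k+1) ≤ Nat.choose (k+3) (k+1) := Nat.choose_le_choose (k+1) (by omega)
      have h3 : Nat.choose (k+2) (k+1) = k+2 := Nat.choose_succ_self_right (k+1)
      omega

theorem stmt_4 (m n : ℕ) (hm : 1 ≤ m) (hn : 1 ≤ n) (x : ℝ) (hx : 0 < x) (hx' : x < π) :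
    0 < ∑ k ∈ (Finset.range (n + 1)).filter (fun k => Even k),
        ((n - k + m).choose m : ℝ) * Real.cos ((k + 1/2) * x) := by
  set J := n / 2 with hJ
  set c : ℕ → ℝ := fun j => if 2*j ≤ n then (((n - 2*j + m).choose m : ℕ) : ℝ) else 0 with hcdef
  set u : ℕ → ℝ := fun j => Real.cos ((2*(j:ℝ) + 1/2) * x) with hudef
  -- Step A: reindex
  have himg : (Finset.range (n + 1)).filter (fun k => Even k)
      = (Finset.range (J+1)).image (fun j => 2*j) := by
    ext k
    simp only [Finset.mem_filter, Finset.mem_range, Finset.mem_image, Nat.even_iff]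
    constructor
    · rintro ⟨h1, h2⟩
      exact ⟨k/2, by omega, by omega⟩
    · rintro ⟨j, hj, rfl⟩
      constructor
      · omega
      · omega
  have hinj : ∀ a ∈ Finset.range (J+1), ∀ b ∈ Finset.range (J+1), 2*a = 2*b → a = b := by
    intro a _ b _ h
    omega
  have hstepA : ∑ k ∈ (Finset.range (n + 1)).filter (fun k => Even k),
        ((n - k + m).choose m : ℝ) * Real.cos ((k + 1/2) * x)
      = ∑ j ∈ Finset.range (J+1), c j * u j := by
    rw [himg, Finset.sum_image hinj]
    apply Finset.sum_congr rfl
    intro j hj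
    rw [Finset.mem_range] at hj
    have h2j : 2*j ≤ n := by omega
    rw [hcdef, hudef]
    simp only [if_pos h2j]
    push_cast
    ring_nf
  rw [hstepA]
  -- Step B: decomposition
  have hc0 : ∀ i, J < i → c i = 0 := by
    intro i hi
    rw [hcdef]
    exact if_neg (by omega)
  rw [decomp c u J hc0]
  -- Step C: positivity
  apply Finset.sum_pos'
  · intro p hp
    rw [Finset.mem_range] at hp
    have hQ : 0 < ∑ j ∈ range (p+1), ((p+1-j:ℕ):ℝ) * u j := qpos x hx hx' p
    apply mul_nonneg _ hQ.le
    -- d p ≥ 0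
    by_cases h1 : 2*(p+1) ≤ n
    · by_cases h2 : 2*(p+2) ≤ n
      · -- all three terms present
        set r := n - 2*(p+2) with hr
        have e0 : 2*p ≤ n := by omega
        have e1 : n - 2*p = r + 4 := by omega
        have e2 : n - 2*(p+1) = r + 2 := by omega
        have hcp : c p = ((r+4+m).choose m : ℝ) := by
          rw [hcdef]; simp only [if_pos e0]; rw [e1]
        have hcp1 : c (p+1) = ((r+2+m).choose m : ℝ) := by
          rw [hcdef]; simp only [if_pos h1]; rw [e2]
        have hcp2 : c (p+2) = ((r+m).choose m : ℝ) := by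
          rw [hcdef]; simp only [if_pos h2]; rfl
        obtain ⟨m', rfl⟩ : ∃ m', m = m'+1 := ⟨m-1, by omega⟩
        have hkey := conv_choose m' (r+m'+1)
        have e3 : r+m'+1+2 = r+2+(m'+1) := by omega
        have e4 : r+m'+1+4 = r+4+(m'+1) := by omega
        rw [e3, e4] at hkey
        have e5 : r+m'+1 = r+(m'+1) := by omega
        rw [e5] at hkey
        have hkeyR : 2 * (((r+2+(m'+1)).choose (m'+1) : ℕ) : ℝ)
            ≤ (((r+4+(m'+1)).choose (m'+1) : ℕ) : ℝ) + (((r+(m'+1)).choose (m'+1) : ℕ) : ℝ) := by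
          exact_mod_cast hkey
        rw [hcp, hcp1, hcp2]
        linarith
      · -- c (p+2) = 0
        have hcp2 : c (p+2) = 0 := by rw [hcdef]; exact if_neg (by omega)
        set r := n - 2*(p+1) with hr
        have hr1 : r ≤ 1 := by omega
        have e0 : 2*p ≤ n := by omega
        have e1 : n - 2*p = r + 2 := by omega
        have hcp : c p = ((r+2+m).choose m : ℝ) := by
          rw [hcdef]; simp only [if_pos e0]; rw [e1]
        have hcp1 : c (p+1) = ((r+m).choose m : ℝ) := by
          rw [hcdef]; simp only [if_pos h1]; rfl
        have hkey : 2 * Nat.choose (r+m) m ≤ Nat.choose (r+2+m) m := by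
          interval_cases r
          · have := bdry0 m hm
            have hs : Nat.choose (0+m) m = 1 := by simp
            have e2 : 0+2+m = m+2 := by omega
            rw [hs, e2]
            omega
          · have := bdry1 m hm
            have hs : Nat.choose (1+m) m = m+1 := by
              have : 1+m = m+1 := by omega
              rw [this]
              exact Nat.choose_succ_self_right m
            have e2 : 1+2+m = m+3 := by omega
            rw [hs, e2]
            omega
        have hkeyR : 2 * (((r+m).choose m : ℕ) : ℝ) ≤ (((r+2+m).choose m : ℕ) : ℝ) := by
          exact_mod_cast hkey
        rw [hcp, hcp1, hcp2]
        linarith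
    · -- c (p+1) = c (p+2) = 0
      have hcp1 : c (p+1) = 0 := by rw [hcdef]; exact if_neg (by omega)
      have hcp2 : c (p+2) = 0 := by rw [hcdef]; exact if_neg (by omega)
      rw [hcp1, hcp2]
      have : 0 ≤ c p := by
        rw [hcdef]
        by_cases h : 2*p ≤ n
        · simp only [if_pos h]; positivity
        · simp [if_neg h]
      linarith
  · refine ⟨J, Finset.self_mem_range_succ J, ?_⟩
    have hQ : 0 < ∑ j ∈ range (J+1), ((J+1-j:ℕ):ℝ) * u j := qpos x hx hx' J
    apply mul_pos _ hQ
    have hcp1 : c (J+1) = 0 := by rw [hcdef]; exact if_neg (by omega)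
    have hcp2 : c (J+2) = 0 := by rw [hcdef]; exact if_neg (by omega)
    rw [hcp1, hcp2]
    have h2J : 2*J ≤ n := by omega
    have : c J = (((n - 2*J + m).choose m : ℕ) : ℝ) := by rw [hcdef]; simp only [if_pos h2J]
    rw [this]
    have hpos : 0 < (n - 2*J + m).choose m := Nat.choose_pos (by omega)
    have : (1:ℝ) ≤ (((n - 2*J + m).choose m : ℕ) : ℝ) := by exact_mod_cast hpos
    linarith
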